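/- Let G = V^t ⋊ H be a finite solvable group with V a faithful irreducible H-module, and let M₁ = W₁H^{v₁}, …, M_n = W_nH^{v_n} be maximal subgroups of G supplementing V^t (W_i maximal H-submodules of V^t, v_i ∈ V^t). Then ⋂_{i=1}^n M_i = U·C_{H*}(Z), where U = ⋂_{i=1}^n W_i, H* is a conjugate of H in G, and Z is an End_H(V)-subspace of V (identifying V diagonally). -/

import Mathlib

namespace PaperSDP

variable {V H : Type*} [AddCommGroup V] [Group H] [DistribMulAction H V] {t : ℕ}

/-- The diagonal action of `H` on `V^t`, as a homomorphism into the
(multiplicatively written) automorphism group of `V^t`. -/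
def phi (V : Type*) [AddCommGroup V] (H : Type*) [Group H] [DistribMulAction H V]
    (t : ℕ) : H →* MulAut (Multiplicative (Fin t → V)) where
  toFun h := AddEquiv.toMultiplicative (DistribMulAction.toAddAut H (Fin t → V) h)
  map_one' := by ext v; simp
  map_mul' h₁ h₂ := by ext v; simp [mul_smul]

/-- The semidirect product `G = V^t ⋊ H` with diagonal action. -/
abbrev SDP (V : Type*) [AddCommGroup V] (H : Type*) [Group H] [DistribMulAction H V]
    (t : ℕ) : Type _ :=
  (Multiplicative (Fin t → V)) ⋊[phi V H t] H

/-- The copy of `V^t` inside `G`. -/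
def VtG (V : Type*) [AddCommGroup V] (H : Type*) [Group H] [DistribMulAction H V]
    (t : ℕ) : Subgroup (SDP V H t) :=
  (SemidirectProduct.inl : Multiplicative (Fin t → V) →* SDP V H t).range

/-- The image in `G` of an additive subgroup `W` of `V^t`. -/
def subG (W : AddSubgroup (Fin t → V)) : Subgroup (SDP V H t) :=
  (AddSubgroup.toSubgroup W).map
    (SemidirectProduct.inl : Multiplicative (Fin t → V) →* SDP V H t)

/-- The element of `G` corresponding to `v ∈ V^t`. -/
def elemG (v : Fin t → V) : SDP V H t :=
  SemidirectProduct.inl (Multiplicative.ofAdd v)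

/-- The conjugate `K^v = v⁻¹ K v` of a subgroup `K ≤ G` by an element `v ∈ V^t`. -/
def conjG (K : Subgroup (SDP V H t)) (v : Fin t → V) : Subgroup (SDP V H t) :=
  K.map (MulAut.conj (elemG v)⁻¹).toMonoidHom

/-- The copy `H^v` of `H` in `G`, conjugated by `v ∈ V^t`. -/
def HG (V : Type*) [AddCommGroup V] (H : Type*) [Group H] [DistribMulAction H V]
    (t : ℕ) (v : Fin t → V) : Subgroup (SDP V H t) :=
  conjG (SemidirectProduct.inr : H →* SDP V H t).range v

/-- `W` is an `H`-submodule of `V^t` (an `H`-invariant additive subgroup). -/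
def IsHSub (H : Type*) [Group H] [DistribMulAction H V]
    (W : AddSubgroup (Fin t → V)) : Prop :=
  ∀ (h : H) (w : Fin t → V), w ∈ W → h • w ∈ W

/-- `W` is a maximal `H`-submodule of `V^t`. -/
def IsMaxHSub (H : Type*) [Group H] [DistribMulAction H V]
    (W : AddSubgroup (Fin t → V)) : Prop :=
  IsHSub H W ∧ W ≠ ⊤ ∧ ∀ W' : AddSubgroup (Fin t → V), IsHSub H W' → W < W' → W' = ⊤

/-- The action of `H` on `V` is (faithful and) irreducible. -/
def IsIrreducible (H : Type*) [Group H] (V : Type*) [AddCommGroup V]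
    [DistribMulAction H V] : Prop :=
  (⊥ : AddSubgroup V) ≠ ⊤ ∧
    ∀ W : AddSubgroup V, (∀ (h : H) (w : V), w ∈ W → h • w ∈ W) → W = ⊥ ∨ W = ⊤

/-- The action of `H` on `V` is faithful. -/
def IsFaithful (H : Type*) [Group H] (V : Type*) [AddCommGroup V]
    [DistribMulAction H V] : Prop :=
  ∀ h : H, (∀ v : V, h • v = v) → h = 1

/-- An `End_H(V)`-subspace of `V`: an additive subgroup stable under all
`H`-equivariant additive endomorphisms of `V`. -/
def IsFSub (H : Type*) [Group H] (V : Type*) [AddCommGroup V] [DistribMulAction H V]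
    (Z : AddSubgroup V) : Prop :=
  ∀ f : V →+ V, (∀ (h : H) (v : V), f (h • v) = h • f v) → ∀ z ∈ Z, f z ∈ Z

/-- The centralizer `C_{H*}(Z)` of a subset `Z ⊆ V` (embedded diagonally in `V^t`)
in the conjugate `H* = H^g` of `H`, inside `G`. -/
def CHstar (g : SDP V H t) (Z : AddSubgroup V) : Subgroup (SDP V H t) :=
  ((SemidirectProduct.inr : H →* SDP V H t).range.map (MulAut.conj g).toMonoidHom) ⊓
    Subgroup.centralizer ((fun z : V => elemG (H := H) (fun _ : Fin t => z)) '' Z)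

end PaperSDP

open PaperSDP

section PartA

variable {V H : Type*} [AddCommGroup V] [Group H] [DistribMulAction H V]

/-- The ring of `H`-equivariant additive endomorphisms of `V`. -/
def FRing (H V : Type*) [AddCommGroup V] [Group H] [DistribMulAction H V] :
    Subring (AddMonoid.End V) where
  carrier := {f | ∀ (h : H) (v : V), f (h • v) = h • f v}
  zero_mem' := by intro h v; simp
  one_mem' := by intro h v; rfl
  add_mem' := by
    intro f g hf hg h v
    show f (h • v) + g (h • v) = h • (f v + g v)
    rw [hf h v, hg h v, smul_add]
  neg_mem' := by
    intro f hf h v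
    show -(f (h • v)) = h • (-(f v))
    rw [hf h v, smul_neg]
  mul_mem' := by intro f g hf hg h v; show f (g (h • v)) = h • f (g v); rw [hg, hf]

instance : Module (FRing H V) V :=
  Module.compHom V (SubringClass.subtype (FRing H V))

lemma FRing.smul_def (f : FRing H V) (v : V) : f • v = f.1 v := rfl

lemma FRing.smul_comm' (f : FRing H V) (h : H) (v : V) : f • (h • v) = h • (f • v) := f.2 h v

lemma FRing.isUnit_or_eq_zero (hirr : IsIrreducible H V) (f : FRing H V) :
    IsUnit f ∨ f = 0 := by
  by_cases hf0 : f = 0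
  · exact Or.inr hf0
  left
  have hker : ∀ v : V, f.1 v = 0 → v = 0 := by
    set K : AddSubgroup V :=
      { carrier := {v | f.1 v = 0}
        zero_mem' := map_zero f.1
        add_mem' := fun {a b} ha hb => by simp_all [map_add]
        neg_mem' := fun {a} ha => by simp_all [map_neg] } with hK
    have hKH : ∀ (h : H) (w : V), w ∈ K → h • w ∈ K := by
      intro h w hw
      show f.1 (h • w) = 0
      rw [f.2 h w, show f.1 w = 0 from hw, smul_zero]
    rcases hirr.2 K hKH with h | h
    · intro v hv
      have hv' : v ∈ K := hv
      rw [h] at hv'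
      exact hv'
    · exfalso
      apply hf0
      apply Subtype.ext
      apply DFunLike.ext
      intro v
      have hv : v ∈ K := h ▸ AddSubgroup.mem_top v
      exact hv
  have hinj : Function.Injective f.1 := by
    intro a b hab
    have h1 : f.1 (a - b) = 0 := by rw [map_sub, hab, sub_self]
    exact sub_eq_zero.mp (hker _ h1)
  have hsurj : Function.Surjective f.1 := by
    set R : AddSubgroup V :=
      { carrier := Set.range f.1
        zero_mem' := ⟨0, map_zero f.1⟩
        add_mem' := by
          rintro a b ⟨x, hx⟩ ⟨y, hy⟩
          exact ⟨x + y, by rw [map_add, hx, hy]⟩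
        neg_mem' := by
          rintro a ⟨x, hx⟩
          exact ⟨-x, by rw [map_neg, hx]⟩ } with hR
    have hRH : ∀ (h : H) (w : V), w ∈ R → h • w ∈ R := by
      rintro h w ⟨x, rfl⟩
      exact ⟨h • x, f.2 h x⟩
    rcases hirr.2 R hRH with h | h
    · exfalso
      apply hf0
      apply Subtype.ext
      apply DFunLike.ext
      intro v
      have : f.1 v ∈ R := ⟨v, rfl⟩
      rw [h] at this
      exact this
    · intro w
      have : w ∈ R := h ▸ AddSubgroup.mem_top w
      exact this
  set e : V ≃+ V := AddEquiv.ofBijective f.1 ⟨hinj, hsurj⟩ with he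
  have hfg : ∀ w, f.1 (e.symm w) = w := fun w => e.apply_symm_apply w
  have hgf : ∀ v, e.symm (f.1 v) = v := fun v => e.symm_apply_apply v
  have hgEq : ∀ (h : H) (v : V), e.symm.toAddMonoidHom (h • v) = h • e.symm.toAddMonoidHom v := by
    intro h v
    apply hinj
    show f.1 (e.symm (h • v)) = f.1 (h • e.symm v)
    rw [hfg, f.2, hfg]
  refine ⟨⟨f, ⟨(e.symm.toAddMonoidHom : AddMonoid.End V), hgEq⟩, ?_, ?_⟩, rfl⟩
  · exact Subtype.ext (DFunLike.ext _ _ fun v => hfg v)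
  · exact Subtype.ext (DFunLike.ext _ _ fun v => hgf v)

lemma FRing.nontrivial (hirr : IsIrreducible H V) : Nontrivial (FRing H V) := by
  refine ⟨1, 0, fun h10 => hirr.1 ?_⟩
  ext v
  simp only [AddSubgroup.mem_bot, AddSubgroup.mem_top, iff_true]
  have : (1 : FRing H V).1 v = (0 : FRing H V).1 v := by rw [h10]
  simpa using this

@[reducible]
noncomputable def fieldFRing [Finite V] (hirr : IsIrreducible H V) : Field (FRing H V) :=
  haveI : Finite (AddMonoid.End V) :=
    Finite.of_injective (fun f => (f : V → V)) DFunLike.coe_injective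
  haveI : Finite (FRing H V) := Subtype.finite
  haveI : Nontrivial (FRing H V) := FRing.nontrivial hirr
  letI : DivisionRing (FRing H V) :=
    DivisionRing.ofIsUnitOrEqZero (FRing.isUnit_or_eq_zero hirr)
  littleWedderburn _

end PartA

section MatrixSolve

lemma exists_functional {F M₀ : Type*} [Field F] [AddCommGroup M₀] [Module F M₀]
    (p : Submodule F M₀) (c : M₀) (hc : c ∉ p) :
    ∃ φ : M₀ →ₗ[F] F, (∀ s ∈ p, φ s = 0) ∧ φ c ≠ 0 := by
  have h1 : (Submodule.Quotient.mk c : M₀ ⧸ p) ≠ 0 := by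
    simpa [Submodule.Quotient.mk_eq_zero] using hc
  obtain ⟨ψ, hψ⟩ : ∃ ψ : Module.Dual F (M₀ ⧸ p), ψ (Submodule.Quotient.mk c) ≠ 0 := by
    by_contra hcon
    push_neg at hcon
    exact h1 ((Module.forall_dual_apply_eq_zero_iff F _).1 hcon)
  refine ⟨ψ.comp p.mkQ, fun s hs => ?_, ?_⟩
  · have : p.mkQ s = 0 := by
      simpa [Submodule.mkQ_apply, Submodule.Quotient.mk_eq_zero] using hs
    simp [LinearMap.comp_apply, this]
  · simpa [LinearMap.comp_apply, Submodule.mkQ_apply] using hψ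

lemma matrix_solve {F : Type*} [Field F] {M : Type*} [AddCommGroup M] [Module F M] :
    ∀ {n t : ℕ} (c : Fin n → Fin t → F) (w : Fin n → M),
    (∀ a : Fin n → F, (∀ j, ∑ i, a i * c i j = 0) → ∑ i, a i • w i = 0) →
    ∃ x : Fin t → M, ∀ i, ∑ j, c i j • x j = w i := by
  intro n
  induction n with
  | zero => exact fun c w _ => ⟨0, fun i => i.elim0⟩
  | succ n ih =>
    intro t c w hw
    obtain ⟨x₀, hx₀⟩ := ih (fun i => c i.castSucc) (fun i => w i.castSucc) (by
      intro a ha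
      have h2 := hw (Fin.snoc a 0) (by
        intro j
        have := ha j
        rw [Fin.sum_univ_castSucc]
        simpa [Fin.snoc_castSucc, Fin.snoc_last] using this)
      rw [Fin.sum_univ_castSucc] at h2
      simpa [Fin.snoc_castSucc, Fin.snoc_last] using h2)
    by_cases hspan : c (Fin.last n) ∈
        Submodule.span F (Set.range (fun i : Fin n => c i.castSucc))
    · rw [Submodule.mem_span_range_iff_exists_fun] at hspan
      obtain ⟨b, hb⟩ := hspan
      refine ⟨x₀, fun i => ?_⟩
      refine Fin.lastCases ?_ (fun i => hx₀ i) i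
      have hlastrow : ∀ j, c (Fin.last n) j = ∑ i, b i * c i.castSucc j := by
        intro j
        rw [← hb]
        simp [Finset.sum_apply]
      have h1 : ∑ j, c (Fin.last n) j • x₀ j = ∑ i : Fin n, b i • w i.castSucc := by
        calc ∑ j, c (Fin.last n) j • x₀ j
            = ∑ j, ∑ i : Fin n, (b i * c i.castSucc j) • x₀ j := by
              refine Finset.sum_congr rfl fun j _ => ?_
              rw [hlastrow j, Finset.sum_smul]
          _ = ∑ i : Fin n, ∑ j, (b i * c i.castSucc j) • x₀ j := Finset.sum_comm
          _ = ∑ i : Fin n, b i • ∑ j, c i.castSucc j • x₀ j := by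
              refine Finset.sum_congr rfl fun i _ => ?_
              rw [Finset.smul_sum]
              exact Finset.sum_congr rfl fun j _ => (mul_smul _ _ _)
          _ = ∑ i : Fin n, b i • w i.castSucc := by
              refine Finset.sum_congr rfl fun i _ => ?_
              rw [hx₀ i]
      have h2 := hw (Fin.snoc b (-1)) (by
        intro j
        rw [Fin.sum_univ_castSucc]
        simp only [Fin.snoc_castSucc, Fin.snoc_last]
        rw [hlastrow j]
        ring)
      rw [Fin.sum_univ_castSucc] at h2
      simp only [Fin.snoc_castSucc, Fin.snoc_last, neg_smul, one_smul] at h2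
      rw [h1]
      have := sub_eq_zero.mp (by simpa [sub_eq_add_neg] using h2)
      exact this
    · obtain ⟨φ, hφ0, hφc⟩ := exists_functional _ _ hspan
      set α := φ (c (Fin.last n)) with hα
      set m := w (Fin.last n) - ∑ j, c (Fin.last n) j • x₀ j with hm
      have key : ∀ i : Fin (n + 1),
          ∑ j, c i j • ((α⁻¹ * φ (Pi.single j 1)) • m) = (α⁻¹ * φ (c i)) • m := by
        intro i
        have hrow : c i = ∑ j, (c i j) • (Pi.single j (1 : F) : Fin t → F) := by
          funext k
          simp [Finset.sum_apply, Pi.single_apply]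
        calc ∑ j, c i j • ((α⁻¹ * φ (Pi.single j 1)) • m)
            = ∑ j, (α⁻¹ * (c i j * φ (Pi.single j 1))) • m := by
              refine Finset.sum_congr rfl fun j _ => ?_
              rw [smul_smul]
              ring_nf
          _ = (α⁻¹ * φ (c i)) • m := by
              rw [← Finset.sum_smul]
              congr 1
              have hphi : φ (c i) = ∑ j, c i j * φ (Pi.single j 1) := by
                conv_lhs => rw [hrow]
                rw [map_sum]
                exact Finset.sum_congr rfl fun j _ => by rw [map_smul, smul_eq_mul]
              rw [hphi, Finset.mul_sum]
      refine ⟨fun j => x₀ j + (α⁻¹ * φ (Pi.single j 1)) • m, fun i => ?_⟩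
      have hsplit : ∑ j, c i j • (x₀ j + (α⁻¹ * φ (Pi.single j 1)) • m)
          = (∑ j, c i j • x₀ j) + ∑ j, c i j • ((α⁻¹ * φ (Pi.single j 1)) • m) := by
        rw [← Finset.sum_add_distrib]
        exact Finset.sum_congr rfl fun j _ => smul_add _ _ _
      rw [hsplit, key i]
      refine Fin.lastCases ?_ (fun i' => ?_) i
      · rw [inv_mul_cancel₀ hφc, one_smul, hm]
        abel
      · have : φ (c i'.castSucc) = 0 :=
          hφ0 _ (Submodule.subset_span (Set.mem_range_self i'))
        rw [this, mul_zero, zero_smul, add_zero, hx₀ i']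

end MatrixSolve

section Core

variable {V H : Type*} [AddCommGroup V] [Group H] [DistribMulAction H V]

lemma smul_single {t : ℕ} (j : Fin t) (h : H) (vv : V) :
    h • (Pi.single j vv : Fin t → V) = Pi.single j (h • vv) := by
  funext k
  by_cases hk : k = j
  · subst hk; simp
  · simp [Pi.single_apply, hk, Pi.smul_apply]

lemma core_lemma [Finite V] (hirr : IsIrreducible H V) {t n : ℕ}
    (lam : Fin n → ((Fin t → V) →+ V))
    (hequiv : ∀ i (h : H) (x : Fin t → V), lam i (h • x) = h • lam i x)
    (z : Fin n → V) :
    ∃ (Z : AddSubgroup V) (u : Fin t → V), IsFSub H V Z ∧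
      (∀ (h : H), (∀ w ∈ Z, h • w = w) → ∀ i, h • (lam i u - z i) = lam i u - z i) ∧
      (∀ (h : H) (x : Fin t → V), (∀ i, lam i x = h • z i - z i) → ∀ w ∈ Z, h • w = w) ∧
      (n = 0 → ∀ w ∈ Z, w = 0) := by
  letI : Field (FRing H V) := fieldFRing hirr
  -- the matrix of coefficients
  have hcmem : ∀ (i : Fin n) (j : Fin t),
      ((lam i).comp (AddMonoidHom.single (fun _ : Fin t => V) j) : AddMonoid.End V) ∈
        FRing H V := by
    intro i j h vv
    show lam i (Pi.single j (h • vv)) = h • lam i (Pi.single j vv)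
    rw [← smul_single, hequiv]
  set c : Fin n → Fin t → FRing H V := fun i j =>
    ⟨((lam i).comp (AddMonoidHom.single (fun _ : Fin t => V) j) : AddMonoid.End V),
      hcmem i j⟩ with hc
  have hcsmul : ∀ (i : Fin n) (j : Fin t) (vv : V), c i j • vv = lam i (Pi.single j vv) := by
    intro i j vv; rfl
  have hlam_eq : ∀ (i : Fin n) (x : Fin t → V), lam i x = ∑ j, c i j • x j := by
    intro i x
    conv_lhs => rw [← Finset.univ_sum_single x]
    rw [map_sum]
    exact Finset.sum_congr rfl fun j _ => (hcsmul i j (x j)).symm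
  -- the subgroup Z
  set Zc : Set V :=
    {w | ∃ a : Fin n → FRing H V, (∀ j, ∑ i, a i * c i j = 0) ∧ w = ∑ i, a i • z i} with hZc
  set Z : AddSubgroup V :=
    { carrier := Zc
      zero_mem' := ⟨0, by simp, by simp; exact (Finset.sum_eq_zero fun i _ => rfl).symm⟩
      add_mem' := by
        rintro x y ⟨a, ha, rfl⟩ ⟨b, hb, rfl⟩
        refine ⟨a + b, fun j => ?_, ?_⟩
        · simp only [Pi.add_apply, add_mul]
          rw [Finset.sum_add_distrib, ha j, hb j, add_zero]
        · simp only [Pi.add_apply, add_smul]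
          rw [Finset.sum_add_distrib]
      neg_mem' := by
        rintro x ⟨a, ha, rfl⟩
        refine ⟨-a, fun j => ?_, ?_⟩
        · simp only [Pi.neg_apply, neg_mul]
          rw [Finset.sum_neg_distrib, ha j, neg_zero]
        · simp only [Pi.neg_apply, neg_smul]
          rw [Finset.sum_neg_distrib] } with hZ
  -- Z is an End_H(V)-subspace
  have hZF : IsFSub H V Z := by
    intro f hf w hw
    obtain ⟨a, ha, rfl⟩ := hw
    set fF : FRing H V := ⟨(f : AddMonoid.End V), hf⟩ with hfF
    refine ⟨fun i => fF * a i, fun j => ?_, ?_⟩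
    · calc ∑ i, fF * a i * c i j = fF * ∑ i, a i * c i j := by
            rw [Finset.mul_sum]
            exact Finset.sum_congr rfl fun i _ => (mul_assoc _ _ _)
        _ = 0 := by rw [ha j, mul_zero]
    · rw [map_sum]
      refine Finset.sum_congr rfl fun i _ => ?_
      rw [mul_smul]
      rfl
  -- the submodule of C_H(Z)-fixed points
  set Fix : Submodule (FRing H V) V :=
    { carrier := {m | ∀ h : H, (∀ w ∈ Z, h • w = w) → h • m = m}
      zero_mem' := fun h _ => smul_zero h
      add_mem' := fun {x y} hx hy h hh => by rw [smul_add, hx h hh, hy h hh]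
      smul_mem' := fun g m hm h hh => by
        rw [← FRing.smul_comm', hm h hh] } with hFix
  have hZFix : ∀ w ∈ Z, w ∈ Fix := fun w hw h hh => hh w hw
  -- solve the linear system modulo Fix
  obtain ⟨xq, hxq⟩ := matrix_solve c
      (fun i => (Submodule.Quotient.mk (z i) : V ⧸ Fix)) (by
    intro a ha
    have hmem : (∑ i, a i • z i) ∈ Fix := hZFix _ ⟨a, ha, rfl⟩
    have : ∑ i, a i • (Submodule.Quotient.mk (z i) : V ⧸ Fix)
        = Fix.mkQ (∑ i, a i • z i) := by
      rw [map_sum]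
      exact Finset.sum_congr rfl fun i _ => by rw [map_smul, Submodule.mkQ_apply]
    rw [this, Submodule.mkQ_apply]
    exact (Submodule.Quotient.mk_eq_zero Fix).2 hmem)
  choose u hu using fun j => Submodule.Quotient.mk_surjective Fix (xq j)
  have hufix : ∀ i, lam i u - z i ∈ Fix := by
    intro i
    have h1 : Fix.mkQ (lam i u) = Submodule.Quotient.mk (z i) := by
      rw [hlam_eq i u, map_sum, ← hxq i]
      refine Finset.sum_congr rfl fun j _ => ?_
      rw [map_smul, Submodule.mkQ_apply, hu j]
    have h2 : Fix.mkQ (lam i u - z i) = 0 := by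
      rw [map_sub, h1, Submodule.mkQ_apply, sub_self]
    rw [Submodule.mkQ_apply] at h2
    exact (Submodule.Quotient.mk_eq_zero Fix).1 h2
  refine ⟨Z, u, hZF, ?_, ?_, ?_⟩
  · intro h hh i
    exact hufix i h hh
  · intro h x hx w hw
    obtain ⟨a, ha, rfl⟩ := hw
    have h1 : h • (∑ i, a i • z i) - (∑ i, a i • z i) = ∑ i, a i • (h • z i - z i) := by
      rw [Finset.smul_sum, ← Finset.sum_sub_distrib]
      refine Finset.sum_congr rfl fun i _ => ?_
      rw [smul_sub, FRing.smul_comm']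
    have h2 : ∑ i, a i • (h • z i - z i) = 0 := by
      calc ∑ i, a i • (h • z i - z i) = ∑ i, a i • lam i x :=
            Finset.sum_congr rfl fun i _ => by rw [hx i]
        _ = ∑ i, a i • ∑ j, c i j • x j :=
            Finset.sum_congr rfl fun i _ => by rw [hlam_eq i x]
        _ = ∑ i, ∑ j, (a i * c i j) • x j := by
            refine Finset.sum_congr rfl fun i _ => ?_
            rw [Finset.smul_sum]
            exact Finset.sum_congr rfl fun j _ => (smul_smul (a i) (c i j) (x j)).symm
        _ = ∑ j, ∑ i, (a i * c i j) • x j := Finset.sum_comm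
        _ = ∑ j, (∑ i, a i * c i j) • x j :=
            Finset.sum_congr rfl fun j _ => (Finset.sum_smul).symm
        _ = 0 := by
            refine Finset.sum_eq_zero fun j _ => ?_
            rw [ha j]
            rfl
    exact sub_eq_zero.mp (h1.trans h2)
  · rintro rfl w hw
    obtain ⟨a, ha, rfl⟩ := hw
    simp

end Core

section Groups

variable {V H : Type*} [AddCommGroup V] [Group H] [DistribMulAction H V] {t : ℕ}

lemma phi_apply (h : H) (y : Multiplicative (Fin t → V)) :
    phi V H t h y = Multiplicative.ofAdd (h • Multiplicative.toAdd y) := rfl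

lemma mem_toSubgroup' {W : AddSubgroup (Fin t → V)} {y : Multiplicative (Fin t → V)} :
    y ∈ AddSubgroup.toSubgroup W ↔ Multiplicative.toAdd y ∈ W := Iff.rfl

/-- The subgroup `W·H^u` of `G`, described explicitly. -/
def shell (W : AddSubgroup (Fin t → V)) (hWs : IsHSub H W) (u : Fin t → V) :
    Subgroup (SDP V H t) where
  carrier := {g | Multiplicative.toAdd g.left - (g.right • u - u) ∈ W}
  one_mem' := by
    show Multiplicative.toAdd (1 : SDP V H t).left - ((1 : SDP V H t).right • u - u) ∈ W
    simpa using W.zero_mem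
  mul_mem' := by
    intro a b ha hb
    show Multiplicative.toAdd (a * b).left - ((a * b).right • u - u) ∈ W
    have hab : Multiplicative.toAdd (a * b).left
        = Multiplicative.toAdd a.left + a.right • Multiplicative.toAdd b.left := rfl
    have key : Multiplicative.toAdd (a * b).left - ((a * b).right • u - u)
        = (Multiplicative.toAdd a.left - (a.right • u - u))
          + a.right • (Multiplicative.toAdd b.left - (b.right • u - u)) := by
      rw [hab, SemidirectProduct.mul_right, mul_smul, smul_sub, smul_sub]
      abel
    rw [key]
    exact W.add_mem ha (hWs a.right _ hb)
  inv_mem' := by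
    intro a ha
    show Multiplicative.toAdd a⁻¹.left - (a⁻¹.right • u - u) ∈ W
    have hal : Multiplicative.toAdd a⁻¹.left
        = a.right⁻¹ • (-(Multiplicative.toAdd a.left)) := rfl
    have key : Multiplicative.toAdd a⁻¹.left - (a⁻¹.right • u - u)
        = -(a.right⁻¹ • (Multiplicative.toAdd a.left - (a.right • u - u))) := by
      rw [hal, SemidirectProduct.inv_right, smul_sub, smul_sub, smul_smul,
        inv_mul_cancel, one_smul, smul_neg]
      abel
    rw [key]
    exact W.neg_mem (hWs _ _ ha)

lemma mem_shell {W : AddSubgroup (Fin t → V)} {hWs : IsHSub H W} {u : Fin t → V}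
    {g : SDP V H t} :
    g ∈ shell W hWs u ↔ Multiplicative.toAdd g.left - (g.right • u - u) ∈ W := Iff.rfl

lemma inl_mul_inr (x : Fin t → V) (h : H) :
    (SemidirectProduct.inl (Multiplicative.ofAdd x) * SemidirectProduct.inr h : SDP V H t)
      = ⟨Multiplicative.ofAdd x, h⟩ := by
  refine SemidirectProduct.ext ?_ ?_
  · simp
  · simp

lemma mk_mul_inl (x y : Fin t → V) (h : H) :
    ((⟨Multiplicative.ofAdd x, h⟩ : SDP V H t)
      * SemidirectProduct.inl (Multiplicative.ofAdd y) : SDP V H t)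
      = ⟨Multiplicative.ofAdd (x + h • y), h⟩ := by
  refine SemidirectProduct.ext ?_ ?_
  · simp only [SemidirectProduct.mul_left, SemidirectProduct.left_inl, phi_apply,
      toAdd_ofAdd, ofAdd_add]
  · simp

lemma inl_mul_inr_mul_inl (x y : Fin t → V) (h : H) :
    (SemidirectProduct.inl (Multiplicative.ofAdd x) * SemidirectProduct.inr h
      * SemidirectProduct.inl (Multiplicative.ofAdd y) : SDP V H t)
      = ⟨Multiplicative.ofAdd (x + h • y), h⟩ := by
  rw [inl_mul_inr, mk_mul_inl]

lemma elemG_inv (u : Fin t → V) :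
    ((elemG u)⁻¹ : SDP V H t) = elemG (-u) := by
  rw [elemG, elemG, ← map_inv]
  rfl

lemma conj_inr (u : Fin t → V) (h : H) :
    (MulAut.conj ((elemG u)⁻¹ : SDP V H t)).toMonoidHom (SemidirectProduct.inr h)
      = ⟨Multiplicative.ofAdd (h • u - u), h⟩ := by
  have h0 : (MulAut.conj ((elemG u)⁻¹ : SDP V H t)).toMonoidHom (SemidirectProduct.inr h)
      = (elemG (-u) : SDP V H t) * SemidirectProduct.inr h * elemG u := by
    rw [MulEquiv.coe_toMonoidHom, MulAut.conj_apply, inv_inv, elemG_inv]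
  rw [h0, elemG, elemG, inl_mul_inr_mul_inl]
  have : -u + h • u = h • u - u := by abel
  rw [this]

lemma sup_subG_HG (W : AddSubgroup (Fin t → V)) (hWs : IsHSub H W) (u : Fin t → V) :
    subG W ⊔ HG V H t u = shell W hWs u := by
  apply le_antisymm
  · refine sup_le ?_ ?_
    · rintro g hg
      obtain ⟨y, hy, rfl⟩ := hg
      show Multiplicative.toAdd (SemidirectProduct.inl y : SDP V H t).left
          - ((SemidirectProduct.inl y : SDP V H t).right • u - u) ∈ W
      simpa using (mem_toSubgroup'.mp hy)
    · rintro g hg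
      obtain ⟨k, hk, rfl⟩ := hg
      obtain ⟨h, rfl⟩ := hk
      rw [mem_shell, conj_inr]
      show (h • u - u) - (h • u - u) ∈ W
      simpa using W.zero_mem
  · intro g hg
    rw [mem_shell] at hg
    have hrep : g = SemidirectProduct.inl
          (Multiplicative.ofAdd (Multiplicative.toAdd g.left - (g.right • u - u)))
        * ((MulAut.conj ((elemG u)⁻¹ : SDP V H t)).toMonoidHom
            (SemidirectProduct.inr g.right)) := by
      rw [conj_inr]
      refine SemidirectProduct.ext ?_ ?_
      · show g.left = Multiplicative.ofAdd (Multiplicative.toAdd g.left - (g.right • u - u))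
            * (phi V H t) 1 (Multiplicative.ofAdd (g.right • u - u))
        rw [map_one, MulAut.one_apply, ← ofAdd_add, sub_add_cancel]
        rfl
      · show g.right = 1 * g.right
        rw [one_mul]
    rw [hrep]
    refine mul_mem ?_ ?_
    · apply (le_sup_left : subG W ≤ subG W ⊔ HG V H t u)
      exact Subgroup.mem_map_of_mem _ (mem_toSubgroup'.mpr hg)
    · apply (le_sup_right : HG V H t u ≤ subG W ⊔ HG V H t u)
      exact Subgroup.mem_map_of_mem _ ⟨g.right, rfl⟩

/-- The pointwise stabilizer of `Z` in `H`. -/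
def HfixZ (Z : AddSubgroup V) : Subgroup H where
  carrier := {h | ∀ z ∈ Z, h • z = z}
  one_mem' := fun z _ => one_smul H z
  mul_mem' := by
    intro a b ha hb z hz
    rw [mul_smul, hb z hz, ha z hz]
  inv_mem' := by
    intro a ha z hz
    conv_lhs => rw [← ha z hz]
    rw [inv_smul_smul]

lemma comm_elemG (g : SDP V H t) (zz : V) (hfix : g.right • zz = zz) :
    (elemG (H := H) (fun _ : Fin t => zz)) * g = g * (elemG (fun _ : Fin t => zz)) := by
  refine SemidirectProduct.ext ?_ ?_
  · show Multiplicative.ofAdd (fun _ : Fin t => zz) * (phi V H t) 1 g.left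
        = g.left * (phi V H t) g.right (Multiplicative.ofAdd (fun _ : Fin t => zz))
    rw [map_one, MulAut.one_apply, phi_apply]
    have h1 : g.right • (Multiplicative.toAdd (Multiplicative.ofAdd (fun _ : Fin t => zz)))
        = (fun _ : Fin t => zz) := by
      funext k
      exact hfix
    rw [h1]
    exact mul_comm _ _
  · show 1 * g.right = g.right * 1
    rw [one_mul, mul_one]

lemma comm_elemG_rev {g : SDP V H t} {zz : V} (ht : 0 < t)
    (hcomm : (elemG (H := H) (fun _ : Fin t => zz)) * g = g * (elemG (fun _ : Fin t => zz))) :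
    g.right • zz = zz := by
  have hleft := congrArg (fun w : SDP V H t => Multiplicative.toAdd w.left) hcomm
  have h1 : (fun _ : Fin t => zz) + Multiplicative.toAdd g.left
      = Multiplicative.toAdd g.left + g.right • (fun _ : Fin t => zz) := by
    simpa [SemidirectProduct.mul_left, phi_apply, elemG, toAdd_mul] using hleft
  have h2 : g.right • (fun _ : Fin t => zz) = (fun _ : Fin t => zz) := by
    have := h1.symm
    rw [add_comm (Multiplicative.toAdd g.left)] at this
    exact add_right_cancel this
  have := congrFun h2 ⟨0, ht⟩
  exact this

lemma sup_subG_CHstar (U : AddSubgroup (Fin t → V)) (hUs : IsHSub H U)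
    (Z : AddSubgroup V) (u : Fin t → V) (hZ0 : t = 0 → ∀ z ∈ Z, z = 0) :
    subG U ⊔ CHstar ((elemG u)⁻¹ : SDP V H t) Z
      = shell U hUs u ⊓ (HfixZ Z).comap
          (SemidirectProduct.rightHom : SDP V H t →* H) := by
  apply le_antisymm
  · refine sup_le ?_ ?_
    · rintro g hg
      obtain ⟨y, hy, rfl⟩ := hg
      rw [Subgroup.mem_inf]
      refine ⟨?_, ?_⟩
      · rw [mem_shell]
        show Multiplicative.toAdd (SemidirectProduct.inl y : SDP V H t).left
            - ((SemidirectProduct.inl y : SDP V H t).right • u - u) ∈ U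
        simpa using (mem_toSubgroup'.mp hy)
      · rw [Subgroup.mem_comap]
        show ∀ z ∈ Z, (SemidirectProduct.inl y : SDP V H t).right • z = z
        intro z _
        show (1 : H) • z = z
        rw [one_smul]
    · intro g hg
      rw [CHstar, Subgroup.mem_inf] at hg
      obtain ⟨hg1, hg2⟩ := hg
      obtain ⟨k, hk, rfl⟩ := hg1
      obtain ⟨h, rfl⟩ := hk
      have hform := conj_inr (V := V) u h
      rw [Subgroup.mem_inf]
      refine ⟨?_, ?_⟩
      · rw [mem_shell, hform]
        show (h • u - u) - (h • u - u) ∈ U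
        simpa using U.zero_mem
      · rw [Subgroup.mem_comap]
        show ∀ z ∈ Z, ((MulAut.conj ((elemG u)⁻¹ : SDP V H t)).toMonoidHom
            (SemidirectProduct.inr h)).right • z = z
        intro z hz
        rcases Nat.eq_zero_or_pos t with ht | ht
        · rw [hZ0 ht z hz, smul_zero]
        · have hcent := Subgroup.mem_centralizer_iff.mp hg2 _ (Set.mem_image_of_mem _ hz)
          exact comm_elemG_rev ht hcent
  · intro g hg
    rw [Subgroup.mem_inf] at hg
    obtain ⟨hsh, hfix⟩ := hg
    rw [mem_shell] at hsh
    rw [Subgroup.mem_comap] at hfix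
    have hfix' : ∀ z ∈ Z, g.right • z = z := hfix
    have hrep : g = SemidirectProduct.inl
          (Multiplicative.ofAdd (Multiplicative.toAdd g.left - (g.right • u - u)))
        * ((MulAut.conj ((elemG u)⁻¹ : SDP V H t)).toMonoidHom
            (SemidirectProduct.inr g.right)) := by
      rw [conj_inr]
      refine SemidirectProduct.ext ?_ ?_
      · show g.left = Multiplicative.ofAdd (Multiplicative.toAdd g.left - (g.right • u - u))
            * (phi V H t) 1 (Multiplicative.ofAdd (g.right • u - u))
        rw [map_one, MulAut.one_apply, ← ofAdd_add, sub_add_cancel]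
        rfl
      · show g.right = 1 * g.right
        rw [one_mul]
    rw [hrep]
    refine mul_mem ?_ ?_
    · apply (le_sup_left : subG U ≤ subG U ⊔ CHstar ((elemG u)⁻¹ : SDP V H t) Z)
      exact Subgroup.mem_map_of_mem _ (mem_toSubgroup'.mpr hsh)
    · apply (le_sup_right : CHstar ((elemG u)⁻¹ : SDP V H t) Z
          ≤ subG U ⊔ CHstar ((elemG u)⁻¹ : SDP V H t) Z)
      rw [CHstar, Subgroup.mem_inf]
      refine ⟨Subgroup.mem_map_of_mem _ ⟨g.right, rfl⟩, ?_⟩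
      rw [Subgroup.mem_centralizer_iff]
      rintro b ⟨zz, hzz, rfl⟩
      have hzr : ((MulAut.conj ((elemG u)⁻¹ : SDP V H t)).toMonoidHom
          (SemidirectProduct.inr g.right)).right • zz = zz := by
        rw [conj_inr]
        exact hfix' zz hzz
      exact comm_elemG _ zz hzr

end Groups

section Proj

variable {V H : Type*} [AddCommGroup V] [Group H] [DistribMulAction H V]

lemma exists_proj {t : ℕ} (hirr : IsIrreducible H V) (W : AddSubgroup (Fin t → V))
    (hmax : IsMaxHSub H W) :
    ∃ lam : (Fin t → V) →+ V, (∀ (h : H) (x : Fin t → V), lam (h • x) = h • lam x) ∧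
      ∀ x, x ∈ W ↔ lam x = 0 := by
  classical
  have hex : ∃ (j : Fin t) (v₀ : V), Pi.single j v₀ ∉ W := by
    by_contra hcon
    push_neg at hcon
    apply hmax.2.1
    ext x
    simp only [AddSubgroup.mem_top, iff_true]
    have hx : x = ∑ j, Pi.single j (x j) := (Finset.univ_sum_single x).symm
    rw [hx]
    exact AddSubgroup.sum_mem _ fun j _ => hcon j (x j)
  obtain ⟨j, v₀, hv₀⟩ := hex
  have hD : ∀ vv : V, Pi.single j vv ∈ W → vv = 0 := by
    set D : AddSubgroup V :=
      { carrier := {vv | Pi.single j vv ∈ W}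
        zero_mem' := by
          show (Pi.single j (0 : V) : Fin t → V) ∈ W
          rw [Pi.single_zero]
          exact W.zero_mem
        add_mem' := by
          intro a b ha hb
          show (Pi.single j (a + b) : Fin t → V) ∈ W
          rw [Pi.single_add]
          exact W.add_mem ha hb
        neg_mem' := by
          intro a ha
          show (Pi.single j (-a) : Fin t → V) ∈ W
          rw [Pi.single_neg]
          exact W.neg_mem ha } with hDdef
    have hDH : ∀ (h : H) (w : V), w ∈ D → h • w ∈ D := by
      intro h w hw
      show (Pi.single j (h • w) : Fin t → V) ∈ W
      rw [← smul_single]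
      exact hmax.1 h _ hw
    rcases hirr.2 D hDH with hbot | htop
    · intro vv hvv
      have h1 : vv ∈ D := hvv
      rw [hbot] at h1
      exact h1
    · exfalso
      apply hv₀
      have h1 : v₀ ∈ D := htop ▸ AddSubgroup.mem_top v₀
      exact h1
  have htop : ∀ x : Fin t → V, ∃ vv : V, x - Pi.single j vv ∈ W := by
    set Wj : AddSubgroup (Fin t → V) :=
      W ⊔ (AddMonoidHom.single (fun _ : Fin t => V) j).range with hWj
    have hWjH : IsHSub H Wj := by
      intro h w hw
      rw [hWj, AddSubgroup.mem_sup] at hw ⊢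
      obtain ⟨a, ha, b, hb, rfl⟩ := hw
      obtain ⟨vv, rfl⟩ := hb
      refine ⟨h • a, hmax.1 h a ha, Pi.single j (h • vv), ⟨h • vv, rfl⟩, ?_⟩
      show h • a + Pi.single j (h • vv) = h • (a + AddMonoidHom.single (fun _ : Fin t => V) j vv)
      rw [smul_add, ← smul_single]
      rfl
    have hlt : W < Wj := by
      refine lt_of_le_of_ne le_sup_left fun he => hv₀ ?_
      rw [he, hWj]
      exact AddSubgroup.mem_sup_right ⟨v₀, rfl⟩
    have hWjtop := hmax.2.2 Wj hWjH hlt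
    intro x
    have hx : x ∈ Wj := hWjtop ▸ AddSubgroup.mem_top x
    rw [hWj, AddSubgroup.mem_sup] at hx
    obtain ⟨a, ha, b, hb, rfl⟩ := hx
    obtain ⟨vv, rfl⟩ := hb
    refine ⟨vv, ?_⟩
    have : a + AddMonoidHom.single (fun _ : Fin t => V) j vv - Pi.single j vv = a := by
      show a + Pi.single j vv - Pi.single j vv = a
      abel
    rw [this]
    exact ha
  have huniq : ∀ (x : Fin t → V) (v1 v2 : V),
      x - Pi.single j v1 ∈ W → x - Pi.single j v2 ∈ W → v1 = v2 := by
    intro x v1 v2 h1 h2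
    have h3 : (Pi.single j (v1 - v2) : Fin t → V) ∈ W := by
      have h4 := W.sub_mem h2 h1
      have h5 : x - Pi.single j v2 - (x - Pi.single j v1)
          = (Pi.single j v1 : Fin t → V) - Pi.single j v2 := by abel
      rw [h5, ← Pi.single_sub] at h4
      exact h4
    exact sub_eq_zero.mp (hD _ h3)
  choose lam hlam using htop
  have hadd : ∀ x y, lam (x + y) = lam x + lam y := by
    intro x y
    refine huniq (x + y) _ _ (hlam (x + y)) ?_
    have h1 : x + y - Pi.single j (lam x + lam y)
        = (x - Pi.single j (lam x)) + (y - Pi.single j (lam y)) := by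
      rw [Pi.single_add]
      abel
    rw [h1]
    exact W.add_mem (hlam x) (hlam y)
  refine ⟨AddMonoidHom.mk' lam hadd, ?_, ?_⟩
  · intro h x
    refine huniq (h • x) _ _ (hlam (h • x)) ?_
    show h • x - Pi.single j (h • lam x) ∈ W
    have h1 : h • x - Pi.single j (h • lam x) = h • (x - Pi.single j (lam x)) := by
      rw [← smul_single, smul_sub]
    rw [h1]
    exact hmax.1 h _ (hlam x)
  · intro x
    constructor
    · intro hx
      show lam x = 0
      refine huniq x _ _ (hlam x) ?_
      rw [Pi.single_zero, sub_zero]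
      exact hx
    · intro hx
      have h1 := hlam x
      rw [show lam x = AddMonoidHom.mk' lam hadd x from rfl, hx, Pi.single_zero, sub_zero] at h1
      exact h1

end Proj


/-- Let `G = V^t ⋊ H` be a finite solvable group with `V` a faithful irreducible
`H`-module, and let `M i = W i · H^{v i}` (`i = 1, …, n`) be maximal subgroups of
`G` supplementing `V^t`, with each `W i` a maximal `H`-submodule of `V^t`.
Then `⋂ᵢ Mᵢ = U·C_{H*}(Z)`, where `U = ⋂ᵢ Wᵢ`, `H*` is a conjugate of `H` in `G`,
and `Z` is an `End_H(V)`-subspace of `V` (with `V` embedded diagonally in `V^t`). -/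
theorem inter_maximal_supplements_eq
    (p : ℕ) (hp : p.Prime) (V H : Type*) [AddCommGroup V] [Group H]
    [DistribMulAction H V] [Finite V] [Finite H] [Group.IsSolvable H]
    (helem : ∀ v : V, p • v = 0)
    (hfaith : IsFaithful H V) (hirr : IsIrreducible H V)
    (t n : ℕ) (W : Fin n → AddSubgroup (Fin t → V)) (v : Fin n → Fin t → V)
    (hW : ∀ i, IsMaxHSub H (W i)) :
    ∃ (g : SDP V H t) (Z : AddSubgroup V), IsFSub H V Z ∧
      (⨅ i, subG (W i) ⊔ HG V H t (v i)) = subG (⨅ i, W i) ⊔ CHstar g Z := by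
  classical
  choose lam hequiv hker using fun i => exists_proj hirr (W i) (hW i)
  obtain ⟨Z, u, hZF, hC1, hC2, hZn⟩ := core_lemma hirr lam hequiv (fun i => lam i (v i))
  refine ⟨(elemG u)⁻¹, Z, hZF, ?_⟩
  have hUs : IsHSub H (⨅ i, W i) := by
    intro h w hw
    rw [AddSubgroup.mem_iInf] at hw ⊢
    exact fun i => (hW i).1 h w (hw i)
  have hZ0 : t = 0 → ∀ z ∈ Z, z = 0 := by
    intro ht
    rcases Nat.eq_zero_or_pos n with hn | hn
    · exact hZn hn
    · exfalso
      apply (hW ⟨0, hn⟩).2.1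
      ext x
      simp only [AddSubgroup.mem_top, iff_true]
      have hx0 : x = 0 := by
        subst ht
        funext jj
        exact jj.elim0
      rw [hx0]
      exact (W ⟨0, hn⟩).zero_mem
  rw [sup_subG_CHstar (⨅ i, W i) hUs Z u hZ0]
  have hLHS : (⨅ i, subG (W i) ⊔ HG V H t (v i))
      = ⨅ i, shell (W i) (hW i).1 (v i) :=
    iInf_congr fun i => sup_subG_HG (W i) (hW i).1 (v i)
  rw [hLHS]
  ext g
  rw [Subgroup.mem_iInf, Subgroup.mem_inf, Subgroup.mem_comap]
  -- the key arithmetic identity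
  have hid : ∀ (r : H), (∀ w ∈ Z, r • w = w) → ∀ i,
      r • lam i u - lam i u = r • lam i (v i) - lam i (v i) := by
    intro r hr i
    have h1 := hC1 r hr i
    rw [smul_sub] at h1
    exact sub_eq_sub_iff_sub_eq_sub.mp h1
  constructor
  · intro hg
    have hgi : ∀ i, lam i (Multiplicative.toAdd g.left)
        = g.right • lam i (v i) - lam i (v i) := by
      intro i
      have h1 := (mem_shell.mp (hg i))
      have h2 := (hker i _).1 h1
      rw [map_sub, map_sub, hequiv i] at h2
      have h3 := sub_eq_zero.mp h2
      exact h3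
    have hfix : ∀ w ∈ Z, g.right • w = w := hC2 g.right _ hgi
    refine ⟨?_, ?_⟩
    · rw [mem_shell, AddSubgroup.mem_iInf]
      intro i
      rw [hker i]
      rw [map_sub, map_sub, hequiv i]
      rw [hgi i, ← hid g.right hfix i]
      abel
    · exact hfix
  · rintro ⟨hsh, hfix⟩ i
    have hfix' : ∀ w ∈ Z, g.right • w = w := hfix
    rw [mem_shell] at hsh
    rw [AddSubgroup.mem_iInf] at hsh
    have h1 := (hker i _).1 (hsh i)
    rw [map_sub, map_sub, hequiv i] at h1
    have h2 := sub_eq_zero.mp h1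
    rw [mem_shell, hker i, map_sub, map_sub, hequiv i, h2, hid g.right hfix' i]
    abel
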